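/- Parameter-perturbation bound for the Softmax–Softmax Gaussian HMoE density: fix d, k₁, k₂ ∈ ℕ, B > 0, K > 0 and 0 < ℓ ≤ u. There exists a constant C > 0 such that for any two parameter families (b, a, β, ω, η, τ, ν) and (b', a', β', ω', η', τ', ν') of a Softmax–Softmax Gaussian HMoE with k₁ groups and k₂ experts per group, with all norms ‖a_{i₁}‖, |b_{i₁}|, ‖ω_{i₂|i₁}‖, |β_{i₂|i₁}|, ‖η_{i₁i₂}‖, |τ_{i₁i₂}| ≤ K (and the same for the primed parameters) and all variances ν_{i₁i₂}, ν'_{i₁i₂} ∈ [ℓ, u], and for every x ∈ ℝ^d with ‖x‖ ≤ B and every y ∈ ℝ: |p^SS_G(y|x) − p^SS_{G'}(y|x)| ≤ C·[ Σ_{i₁=1}^{k₁} (‖a_{i₁}−a'_{i₁}‖ + |b_{i₁}−b'_{i₁}|) + Σ_{i₁=1}^{k₁} Σ_{i₂=1}^{k₂} (‖ω_{i₂|i₁}−ω'_{i₂|i₁}‖ + |β_{i₂|i₁}−β'_{i₂|i₁}| + ‖η_{i₁i₂}−η'_{i₁i₂}‖ + |τ_{i₁i₂}−τ'_{i₁i₂}|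 + |ν_{i₁i₂}−ν'_{i₁i₂}|) ]. -/

import Mathlib

open scoped RealInnerProductSpace

noncomputable section

/-- Euclidean input space `ℝ^d`. -/
abbrev Euc (d : ℕ) := EuclideanSpace ℝ (Fin d)

/-- Univariate Gaussian density `π(y|μ,ν) = (2πν)^(-1/2) exp(-(y-μ)²/(2ν))`. -/
def gaussPDF (m v y : ℝ) : ℝ :=
  (Real.sqrt (2 * Real.pi * v))⁻¹ * Real.exp (-(y - m) ^ 2 / (2 * v))

/-- Parameters of a two-level Gaussian HMoE with `k1` groups and `k2` experts per group:
first-level gating parameters `(b_{i₁}, a_{i₁})`, second-level gating parameters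
`(β_{i₂|i₁}, ω_{i₂|i₁})`, and expert parameters `(η_{i₁i₂}, τ_{i₁i₂}, ν_{i₁i₂})`. -/
structure HMoE (d k1 k2 : ℕ) where
  b : Fin k1 → ℝ
  a : Fin k1 → Euc d
  β : Fin k1 → Fin k2 → ℝ
  ω : Fin k1 → Fin k2 → Euc d
  η : Fin k1 → Fin k2 → Euc d
  τ : Fin k1 → Fin k2 → ℝ
  ν : Fin k1 → Fin k2 → ℝ

/-- Conditional density of the Softmax–Softmax Gaussian HMoE. -/
def pSS {d k1 k2 : ℕ} (P : HMoE d k1 k2) (x : Euc d) (y : ℝ) : ℝ :=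
  ∑ i1, (Real.exp (⟪P.a i1, x⟫ + P.b i1) /
      ∑ j1, Real.exp (⟪P.a j1, x⟫ + P.b j1)) *
    ∑ i2, (Real.exp (⟪P.ω i1 i2, x⟫ + P.β i1 i2) /
        ∑ j2, Real.exp (⟪P.ω i1 j2, x⟫ + P.β i1 j2)) *
      gaussPDF (⟪P.η i1 i2, x⟫ + P.τ i1 i2) (P.ν i1 i2) y


-- Auxiliary lemmas ----------------------------------------------------------

open Real Finset in
lemma exp_sub_exp_abs (a b : ℝ) :
    |Real.exp a - Real.exp b| ≤ max (Real.exp a) (Real.exp b) * |a - b| := by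
  wlog h : b ≤ a with H
  · rw [abs_sub_comm, abs_sub_comm a b, max_comm]
    exact H b a (le_of_not_ge h)
  have h3 := Real.add_one_le_exp (b - a)
  have h4 : Real.exp a * Real.exp (b - a) = Real.exp b := by
    rw [← Real.exp_add]; ring_nf
  have he : Real.exp b ≤ Real.exp a := Real.exp_le_exp.2 h
  rw [abs_of_nonneg (by linarith), abs_of_nonneg (by linarith), max_eq_left he]
  nlinarith [Real.exp_pos a]

lemma self_le_exp_sq (p : ℝ) : p ≤ Real.exp (p ^ 2) := by
  have h1 : p ≤ 1 + p ^ 2 := by nlinarith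
  linarith [Real.add_one_le_exp (p ^ 2)]

lemma exp_neg_sq_lip_aux (p q : ℝ) (hp : 0 ≤ p) (hpq : p ≤ q) :
    Real.exp (-p ^ 2) - Real.exp (-q ^ 2) ≤ 3 * (q - p) := by
  have hq : 0 ≤ q := le_trans hp hpq
  have hqp : 0 ≤ q - p := by linarith
  have hpe : p * Real.exp (-p ^ 2) ≤ 1 := by
    have := self_le_exp_sq p
    have h2 : Real.exp (-p^2) * Real.exp (p^2) = 1 := by
      rw [← Real.exp_add]; simp
    nlinarith [Real.exp_pos (-p^2)]
  have hep : Real.exp (-p^2) ≤ 1 := Real.exp_le_one_iff.2 (by nlinarith)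
  by_cases hc : q ≤ p + 1
  · have h1 : Real.exp (-p^2) * (1 + (p^2 - q^2)) ≤ Real.exp (-q^2) := by
      have h3 := Real.add_one_le_exp (p^2 - q^2)
      have h4 : Real.exp (-p^2) * Real.exp (p^2 - q^2) = Real.exp (-q^2) := by
        rw [← Real.exp_add]; ring_nf
      nlinarith [Real.exp_pos (-p^2)]
    have e1 : Real.exp (-p^2) - Real.exp (-q^2) ≤ Real.exp (-p^2) * ((q-p)*(q+p)) := by
      nlinarith
    have e2 : Real.exp (-p^2) * ((q-p)*(q+p)) ≤ (q-p) * (2*p*Real.exp (-p^2) + Real.exp (-p^2)) := by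
      have hfac : 0 ≤ (q - p) * Real.exp (-p^2) :=
        mul_nonneg hqp (le_of_lt (Real.exp_pos _))
      nlinarith [mul_nonneg hfac (by linarith : (0:ℝ) ≤ 2*p + 1 - (q+p))]
    have e3 : (q-p) * (2*p*Real.exp (-p^2) + Real.exp (-p^2)) ≤ 3 * (q-p) := by
      nlinarith
    linarith
  · have h5 : Real.exp (-p^2) - Real.exp (-q^2) ≤ 1 := by
      nlinarith [Real.exp_pos (-q^2)]
    nlinarith

lemma exp_neg_sq_lip (a b : ℝ) :
    |Real.exp (-a ^ 2) - Real.exp (-b ^ 2)| ≤ 3 * |a - b| := by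
  have key : ∀ p q : ℝ, 0 ≤ p → p ≤ q → |Real.exp (-p^2) - Real.exp (-q^2)| ≤ 3 * (q - p) := by
    intro p q hp hpq
    have h1 : Real.exp (-q^2) ≤ Real.exp (-p^2) := Real.exp_le_exp.2 (by nlinarith)
    rw [abs_of_nonneg (by linarith)]
    exact exp_neg_sq_lip_aux p q hp hpq
  have habs : |Real.exp (-a^2) - Real.exp (-b^2)| ≤ 3 * |(|a| - |b|)| := by
    have ha2 : a^2 = |a|^2 := (sq_abs a).symm
    have hb2 : b^2 = |b|^2 := (sq_abs b).symm
    rw [ha2, hb2]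
    rcases le_total |a| |b| with h | h
    · rw [abs_of_nonpos (by linarith : |a| - |b| ≤ 0)]
      have := key |a| |b| (abs_nonneg a) h
      linarith
    · rw [abs_of_nonneg (by linarith : (0:ℝ) ≤ |a| - |b|), abs_sub_comm]
      exact key |b| |a| (abs_nonneg b) h
  calc |Real.exp (-a^2) - Real.exp (-b^2)| ≤ 3 * |(|a| - |b|)| := habs
    _ ≤ 3 * |a - b| := by linarith [abs_abs_sub_abs_le_abs_sub a b]

lemma sqrt_diff_le (c a b : ℝ) (hc : 0 < c) (ha : c ≤ a) (hb : c ≤ b) :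
    |Real.sqrt a - Real.sqrt b| ≤ |a - b| / (2 * Real.sqrt c) := by
  wlog h : b ≤ a with H
  · rw [abs_sub_comm, abs_sub_comm a b]
    exact H c b a hc hb ha (le_of_not_ge h)
  have hsc : 0 < Real.sqrt c := Real.sqrt_pos.2 hc
  have hsa : Real.sqrt a ^ 2 = a := Real.sq_sqrt (by linarith)
  have hsb : Real.sqrt b ^ 2 = b := Real.sq_sqrt (by linarith)
  have hca : Real.sqrt c ≤ Real.sqrt a := Real.sqrt_le_sqrt ha
  have hcb : Real.sqrt c ≤ Real.sqrt b := Real.sqrt_le_sqrt hb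
  have hmono : Real.sqrt b ≤ Real.sqrt a := Real.sqrt_le_sqrt h
  rw [abs_of_nonneg (by linarith), abs_of_nonneg (by linarith),
    le_div_iff₀ (by positivity)]
  nlinarith

lemma inv_sqrt_lip (c a b : ℝ) (hc : 0 < c) (ha : c ≤ a) (hb : c ≤ b) :
    |(Real.sqrt a)⁻¹ - (Real.sqrt b)⁻¹| ≤ |a - b| / (2 * c * Real.sqrt c) := by
  have hsc : 0 < Real.sqrt c := Real.sqrt_pos.2 hc
  have hsa : 0 < Real.sqrt a := Real.sqrt_pos.2 (by linarith)
  have hsb : 0 < Real.sqrt b := Real.sqrt_pos.2 (by linarith)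
  have hca : Real.sqrt c ≤ Real.sqrt a := Real.sqrt_le_sqrt ha
  have hcb : Real.sqrt c ≤ Real.sqrt b := Real.sqrt_le_sqrt hb
  have hprod : c ≤ Real.sqrt a * Real.sqrt b := by
    have : Real.sqrt c * Real.sqrt c ≤ Real.sqrt a * Real.sqrt b :=
      mul_le_mul hca hcb (le_of_lt hsc) (le_of_lt hsa)
    rwa [Real.mul_self_sqrt (le_of_lt hc)] at this
  have key : (Real.sqrt a)⁻¹ - (Real.sqrt b)⁻¹ =
      (Real.sqrt b - Real.sqrt a) / (Real.sqrt a * Real.sqrt b) := by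
    field_simp
  rw [key, abs_div, abs_of_pos (by positivity : (0:ℝ) < Real.sqrt a * Real.sqrt b)]
  have h1 : |Real.sqrt b - Real.sqrt a| ≤ |a - b| / (2 * Real.sqrt c) := by
    rw [abs_sub_comm a b]
    exact sqrt_diff_le c b a hc hb ha
  calc |Real.sqrt b - Real.sqrt a| / (Real.sqrt a * Real.sqrt b)
      ≤ (|a - b| / (2 * Real.sqrt c)) / c := by
        exact div_le_div₀ (by positivity) h1 hc hprod
    _ = |a - b| / (2 * c * Real.sqrt c) := by ring

lemma two_pi_v_ge (ℓ v : ℝ) (hℓ : 0 < ℓ) (hv : ℓ ≤ v) : ℓ ≤ 2 * Real.pi * v := by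
  nlinarith [Real.pi_gt_three]

lemma inv_sqrt_2piv_le (ℓ v : ℝ) (hℓ : 0 < ℓ) (hv : ℓ ≤ v) :
    (Real.sqrt (2 * Real.pi * v))⁻¹ ≤ (Real.sqrt ℓ)⁻¹ := by
  have h1 : Real.sqrt ℓ ≤ Real.sqrt (2 * Real.pi * v) :=
    Real.sqrt_le_sqrt (two_pi_v_ge ℓ v hℓ hv)
  have h2 : 0 < Real.sqrt ℓ := Real.sqrt_pos.2 hℓ
  exact inv_anti₀ h2 h1

lemma gaussPDF_nonneg (m v y : ℝ) : 0 ≤ gaussPDF m v y := by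
  unfold gaussPDF; positivity

lemma gaussPDF_le (ℓ m v y : ℝ) (hℓ : 0 < ℓ) (hv : ℓ ≤ v) :
    gaussPDF m v y ≤ (Real.sqrt ℓ)⁻¹ := by
  unfold gaussPDF
  have hE : Real.exp (-(y - m) ^ 2 / (2 * v)) ≤ 1 := by
    apply Real.exp_le_one_iff.2
    have hv0 : 0 < v := lt_of_lt_of_le hℓ hv
    have h3 : 0 ≤ (y - m)^2 / (2 * v) := by positivity
    have h4 : -(y - m)^2/(2*v) = -((y - m)^2/(2*v)) := by ring
    linarith [h4.le, h4.ge]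
  calc (Real.sqrt (2 * Real.pi * v))⁻¹ * Real.exp (-(y - m) ^ 2 / (2 * v))
      ≤ (Real.sqrt (2 * Real.pi * v))⁻¹ * 1 := by
        apply mul_le_mul_of_nonneg_left hE (by positivity)
    _ = (Real.sqrt (2 * Real.pi * v))⁻¹ := mul_one _
    _ ≤ (Real.sqrt ℓ)⁻¹ := inv_sqrt_2piv_le ℓ v hℓ hv

lemma sq_exp_neg_le (u z : ℝ) (hu : 0 < u) : z ^ 2 * Real.exp (-z^2/(2*u)) ≤ 2 * u := by
  have hs := Real.add_one_le_exp (z^2/(2*u))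
  have hmul : Real.exp (-z^2/(2*u)) * Real.exp (z^2/(2*u)) = 1 := by
    rw [← Real.exp_add]; ring_nf; exact Real.exp_zero
  have hz : z^2 = 2*u*(z^2/(2*u)) := by field_simp
  have h5 := mul_le_mul_of_nonneg_left hs (le_of_lt (Real.exp_pos (-z^2/(2*u))))
  nlinarith [Real.exp_pos (-z^2/(2*u)), sq_nonneg z]

lemma gauss_lip_m (ℓ m m' v y : ℝ) (hℓ : 0 < ℓ) (hv : ℓ ≤ v) :
    |gaussPDF m v y - gaussPDF m' v y| ≤ (3 / ℓ) * |m - m'| := by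
  have hv0 : 0 < v := lt_of_lt_of_le hℓ hv
  have hc : 0 < Real.sqrt (2 * v) := Real.sqrt_pos.2 (by linarith)
  have hcsq : Real.sqrt (2 * v) ^ 2 = 2 * v := Real.sq_sqrt (by linarith)
  have hrw : ∀ w : ℝ, -(y - w) ^ 2 / (2 * v) = -((y - w) / Real.sqrt (2*v)) ^ 2 := by
    intro w
    rw [div_pow, hcsq]; ring
  have hsl : Real.sqrt ℓ ≤ Real.sqrt (2 * v) := Real.sqrt_le_sqrt (by linarith)
  have hsl0 : 0 < Real.sqrt ℓ := Real.sqrt_pos.2 hℓ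
  unfold gaussPDF
  rw [← mul_sub, abs_mul, hrw m, hrw m']
  have hE : |Real.exp (-((y - m) / Real.sqrt (2*v)) ^ 2) -
      Real.exp (-((y - m') / Real.sqrt (2*v)) ^ 2)| ≤ 3 * (|m - m'| / Real.sqrt ℓ) := by
    calc _ ≤ 3 * |(y - m) / Real.sqrt (2*v) - (y - m') / Real.sqrt (2*v)| :=
          exp_neg_sq_lip _ _
      _ = 3 * (|m - m'| / Real.sqrt (2*v)) := by
          rw [div_sub_div_same]
          have : y - m - (y - m') = -(m - m') := by ring
          rw [this, abs_div, abs_neg, abs_of_pos hc]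
      _ ≤ 3 * (|m - m'| / Real.sqrt ℓ) := by gcongr
  have hI : |(Real.sqrt (2 * Real.pi * v))⁻¹| ≤ (Real.sqrt ℓ)⁻¹ := by
    rw [abs_of_nonneg (by positivity)]
    exact inv_sqrt_2piv_le ℓ v hℓ hv
  calc |(Real.sqrt (2 * Real.pi * v))⁻¹| *
        |Real.exp (-((y - m) / Real.sqrt (2*v)) ^ 2) -
          Real.exp (-((y - m') / Real.sqrt (2*v)) ^ 2)|
      ≤ (Real.sqrt ℓ)⁻¹ * (3 * (|m - m'| / Real.sqrt ℓ)) := by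
        apply mul_le_mul hI hE (abs_nonneg _) (by positivity)
    _ = 3 * |m - m'| / (Real.sqrt ℓ * Real.sqrt ℓ) := by ring
    _ = 3 * |m - m'| / ℓ := by rw [Real.mul_self_sqrt (le_of_lt hℓ)]
    _ = (3 / ℓ) * |m - m'| := by ring

set_option maxHeartbeats 1000000 in
lemma gauss_lip_v (ℓ u m v v' y : ℝ) (hℓ : 0 < ℓ)
    (hv : ℓ ≤ v) (hvu : v ≤ u) (hv' : ℓ ≤ v') (hvu' : v' ≤ u) :
    |gaussPDF m v y - gaussPDF m v' y| ≤
      (1/(ℓ*Real.sqrt ℓ) + u/(ℓ^2*Real.sqrt ℓ)) * |v - v'| := by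
  have hv0 : 0 < v := lt_of_lt_of_le hℓ hv
  have hv0' : 0 < v' := lt_of_lt_of_le hℓ hv'
  have hu : 0 < u := lt_of_lt_of_le hv0 hvu
  have hsl0 : 0 < Real.sqrt ℓ := Real.sqrt_pos.2 hℓ
  set z := y - m with hz
  set I := (Real.sqrt (2 * Real.pi * v))⁻¹ with hI
  set I' := (Real.sqrt (2 * Real.pi * v'))⁻¹ with hI'
  set E := Real.exp (-z^2/(2*v)) with hE
  set E' := Real.exp (-z^2/(2*v')) with hE'
  have e1 : gaussPDF m v y = I * E := rfl
  have e2 : gaussPDF m v' y = I' * E' := rfl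
  clear_value z I I' E E'
  have hEle : E ≤ 1 := by
    rw [hE]
    apply Real.exp_le_one_iff.2
    rw [neg_div]
    have h : (0:ℝ) ≤ z^2/(2*v) := by positivity
    linarith
  have hE0 : 0 < E := by rw [hE]; positivity
  have hI'le : I' ≤ (Real.sqrt ℓ)⁻¹ := by
    rw [hI']; exact inv_sqrt_2piv_le ℓ v' hℓ hv'
  have hI'0 : 0 < I' := by
    rw [hI']
    have := two_pi_v_ge ℓ v' hℓ hv'
    positivity
  have hII : |I - I'| ≤ |v - v'| / (ℓ * Real.sqrt ℓ) := by
    rw [hI, hI']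
    have h0 := inv_sqrt_lip (2*Real.pi*ℓ) (2*Real.pi*v) (2*Real.pi*v')
      (by positivity) (by nlinarith [Real.pi_gt_three]) (by nlinarith [Real.pi_gt_three])
    have h1 : |2*Real.pi*v - 2*Real.pi*v'| = 2*Real.pi*|v - v'| := by
      rw [show 2*Real.pi*v - 2*Real.pi*v' = (2*Real.pi)*(v-v') from by ring, abs_mul,
        abs_of_pos (by positivity : (0:ℝ) < 2*Real.pi)]
    rw [h1] at h0
    have h2 : Real.sqrt ℓ ≤ Real.sqrt (2*Real.pi*ℓ) :=
      Real.sqrt_le_sqrt (by nlinarith [Real.pi_gt_three])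
    have h3 : 2*Real.pi*|v-v'| / (2 * (2*Real.pi*ℓ) * Real.sqrt (2*Real.pi*ℓ))
        ≤ |v - v'| / (ℓ * Real.sqrt ℓ) := by
      rw [div_le_div_iff₀ (by positivity) (by positivity)]
      have key : |v-v'| * Real.sqrt ℓ ≤ |v-v'| * Real.sqrt (2*Real.pi*ℓ) :=
        mul_le_mul_of_nonneg_left h2 (abs_nonneg (v-v'))
      nlinarith [mul_le_mul_of_nonneg_left key
        (by positivity : (0:ℝ) ≤ 2*Real.pi*ℓ), Real.pi_gt_three, hsl0,
        mul_nonneg (mul_nonneg (mul_nonneg Real.pi_pos.le hℓ.le) (abs_nonneg (v-v')))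
          (Real.sqrt_nonneg (2*Real.pi*ℓ))]
    exact le_trans h0 h3
  have hEE : |E - E'| ≤ (u / ℓ^2) * |v - v'| := by
    rw [hE, hE']
    have h0 := exp_sub_exp_abs (-z^2/(2*v)) (-z^2/(2*v'))
    have hmax : max (Real.exp (-z^2/(2*v))) (Real.exp (-z^2/(2*v'))) ≤
        Real.exp (-z^2/(2*u)) := by
      apply max_le
      · apply Real.exp_le_exp.2
        rw [neg_div, neg_div, neg_le_neg_iff, div_le_div_iff₀ (by positivity) (by positivity)]
        nlinarith [sq_nonneg z]
      · apply Real.exp_le_exp.2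
        rw [neg_div, neg_div, neg_le_neg_iff, div_le_div_iff₀ (by positivity) (by positivity)]
        nlinarith [sq_nonneg z]
    have hargs : |(-z^2/(2*v)) - (-z^2/(2*v'))| = z^2 * |v - v'| / (2*(v*v')) := by
      rw [show (-z^2/(2*v)) - (-z^2/(2*v')) = z^2*(v-v')/(2*(v*v')) from by
        field_simp; ring]
      rw [abs_div, abs_mul, abs_of_nonneg (sq_nonneg z),
        abs_of_pos (by positivity : (0:ℝ) < 2*(v*v'))]
    have hkey : Real.exp (-z^2/(2*u)) * (z^2 * |v-v'| / (2*(v*v'))) ≤ (u/ℓ^2) * |v - v'| := by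
      have h4 := sq_exp_neg_le u z hu
      have h5 : z^2 * Real.exp (-z^2/(2*u)) * |v - v'| ≤ 2*u*|v-v'| := by
        apply mul_le_mul_of_nonneg_right h4 (abs_nonneg _)
      have h6 : ℓ^2 ≤ v * v' := by nlinarith
      calc Real.exp (-z^2/(2*u)) * (z^2 * |v-v'| / (2*(v*v')))
          = (z^2 * Real.exp (-z^2/(2*u)) * |v-v'|) / (2*(v*v')) := by ring
        _ ≤ (2*u*|v-v'|) / (2*(v*v')) := by gcongr
        _ ≤ (2*u*|v-v'|) / (2*ℓ^2) := by gcongr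
        _ = (u/ℓ^2) * |v - v'| := by field_simp
    calc |Real.exp (-z^2/(2*v)) - Real.exp (-z^2/(2*v'))|
        ≤ max (Real.exp (-z^2/(2*v))) (Real.exp (-z^2/(2*v'))) *
            |(-z^2/(2*v)) - (-z^2/(2*v'))| := h0
      _ = max (Real.exp (-z^2/(2*v))) (Real.exp (-z^2/(2*v'))) *
            (z^2 * |v - v'| / (2*(v*v'))) := by rw [hargs]
      _ ≤ Real.exp (-z^2/(2*u)) * (z^2 * |v - v'| / (2*(v*v'))) := by
          apply mul_le_mul_of_nonneg_right hmax (by positivity)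
      _ ≤ (u/ℓ^2) * |v - v'| := hkey
  have hsplit : gaussPDF m v y - gaussPDF m v' y = (I - I') * E + I' * (E - E') := by
    rw [e1, e2]; ring
  calc |gaussPDF m v y - gaussPDF m v' y|
      ≤ |(I - I') * E| + |I' * (E - E')| := by rw [hsplit]; exact abs_add_le _ _
    _ = |I - I'| * E + I' * |E - E'| := by
        rw [abs_mul, abs_mul, abs_of_pos hE0, abs_of_pos hI'0]
    _ ≤ (|v - v'| / (ℓ * Real.sqrt ℓ)) * 1 + (Real.sqrt ℓ)⁻¹ * ((u/ℓ^2) * |v - v'|) := by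
        apply add_le_add
        · exact mul_le_mul hII hEle hE0.le (by positivity)
        · exact mul_le_mul hI'le hEE (abs_nonneg _) (by positivity)
    _ = (1/(ℓ*Real.sqrt ℓ) + u/(ℓ^2*Real.sqrt ℓ)) * |v - v'| := by
        field_simp

lemma gauss_lip (ℓ u m m' v v' y : ℝ) (hℓ : 0 < ℓ)
    (hv : ℓ ≤ v) (hvu : v ≤ u) (hv' : ℓ ≤ v') (hvu' : v' ≤ u) :
    |gaussPDF m v y - gaussPDF m' v' y| ≤
      (3/ℓ + 1/(ℓ*Real.sqrt ℓ) + u/(ℓ^2*Real.sqrt ℓ)) * (|m - m'| + |v - v'|) := by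
  have hsl0 : 0 < Real.sqrt ℓ := Real.sqrt_pos.2 hℓ
  have h1 := gauss_lip_m ℓ m m' v y hℓ hv
  have h2 := gauss_lip_v ℓ u m' v v' y hℓ hv hvu hv' hvu'
  have h3 : |gaussPDF m v y - gaussPDF m' v' y| ≤
      |gaussPDF m v y - gaussPDF m' v y| + |gaussPDF m' v y - gaussPDF m' v' y| :=
    abs_sub_le _ _ _
  have hu0 : 0 < u := lt_of_lt_of_le (lt_of_lt_of_le hℓ hv) hvu
  have c1 : 0 ≤ 3/ℓ := by positivity
  have c2 : (0:ℝ) ≤ 1/(ℓ*Real.sqrt ℓ) := by positivity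
  have c3 : 0 ≤ u/(ℓ^2*Real.sqrt ℓ) := by positivity
  nlinarith [abs_nonneg (m - m'), abs_nonneg (v - v'),
    mul_nonneg c1 (abs_nonneg (v - v')), mul_nonneg (add_nonneg c2 c3) (abs_nonneg (m - m'))]

lemma softmax_diff {n : ℕ} (M : ℝ) (t t' : Fin n → ℝ)
    (ht : ∀ j, |t j| ≤ M) (ht' : ∀ j, |t' j| ≤ M) (i : Fin n) :
    |Real.exp (t i) / (∑ j, Real.exp (t j)) -
      Real.exp (t' i) / (∑ j, Real.exp (t' j))| ≤
      2 * Real.exp (2 * M) * ∑ j, |t j - t' j| := by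
  have hexp : ∀ s : ℝ, |s| ≤ M → Real.exp s ≤ Real.exp M := fun s hs =>
    Real.exp_le_exp.2 (le_trans (le_abs_self s) hs)
  set S := ∑ j, Real.exp (t j) with hS
  set S' := ∑ j, Real.exp (t' j) with hS'
  have hSi : Real.exp (t i) ≤ S :=
    Finset.single_le_sum (fun j _ => (Real.exp_pos (t j)).le) (Finset.mem_univ i)
  have hSi' : Real.exp (t' i) ≤ S' :=
    Finset.single_le_sum (fun j _ => (Real.exp_pos (t' j)).le) (Finset.mem_univ i)
  have hSpos : 0 < S := lt_of_lt_of_le (Real.exp_pos (t i)) hSi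
  have hSpos' : 0 < S' := lt_of_lt_of_le (Real.exp_pos (t' i)) hSi'
  have hSlo : Real.exp (-M) ≤ S := by
    refine le_trans ?_ hSi
    exact Real.exp_le_exp.2 (neg_le_of_abs_le (ht i))
  have hinvS : S⁻¹ ≤ Real.exp M := by
    calc S⁻¹ ≤ (Real.exp (-M))⁻¹ := inv_anti₀ (Real.exp_pos _) hSlo
      _ = Real.exp M := by rw [← Real.exp_neg, neg_neg]
  have hei : |Real.exp (t i) - Real.exp (t' i)| ≤ Real.exp M * |t i - t' i| := by
    refine le_trans (exp_sub_exp_abs _ _) ?_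
    apply mul_le_mul_of_nonneg_right _ (abs_nonneg _)
    exact max_le (hexp _ (ht i)) (hexp _ (ht' i))
  have hSS : |S - S'| ≤ Real.exp M * ∑ j, |t j - t' j| := by
    rw [hS, hS', ← Finset.sum_sub_distrib]
    refine le_trans (Finset.abs_sum_le_sum_abs _ _) ?_
    rw [Finset.mul_sum]
    apply Finset.sum_le_sum
    intro j _
    refine le_trans (exp_sub_exp_abs _ _) ?_
    apply mul_le_mul_of_nonneg_right _ (abs_nonneg _)
    exact max_le (hexp _ (ht j)) (hexp _ (ht' j))
  have hkey : Real.exp (t i) / S - Real.exp (t' i) / S' =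
      (Real.exp (t i) - Real.exp (t' i)) / S +
        (Real.exp (t' i) / S') * ((S' - S) / S) := by
    field_simp
    ring
  have hfrac1 : Real.exp (t' i) / S' ≤ 1 := by
    rw [div_le_one hSpos']; exact hSi'
  have hsum_nonneg : (0:ℝ) ≤ ∑ j, |t j - t' j| :=
    Finset.sum_nonneg (fun j _ => abs_nonneg _)
  have hterm_le : |t i - t' i| ≤ ∑ j, |t j - t' j| :=
    Finset.single_le_sum (f := fun j => |t j - t' j|) (fun j _ => abs_nonneg _)
      (Finset.mem_univ i)
  calc |Real.exp (t i) / S - Real.exp (t' i) / S'|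
      ≤ |(Real.exp (t i) - Real.exp (t' i)) / S| +
        |(Real.exp (t' i) / S') * ((S' - S) / S)| := by rw [hkey]; exact abs_add_le _ _
    _ = |Real.exp (t i) - Real.exp (t' i)| * S⁻¹ +
        (Real.exp (t' i) / S') * (|S' - S| * S⁻¹) := by
        simp only [abs_div, abs_mul, abs_of_pos hSpos, abs_of_pos hSpos',
          abs_of_pos (Real.exp_pos (t' i))]
        ring
    _ ≤ (Real.exp M * |t i - t' i|) * Real.exp M +
        1 * ((Real.exp M * ∑ j, |t j - t' j|) * Real.exp M) := by
        apply add_le_add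
        · exact mul_le_mul hei hinvS (by positivity) (by positivity)
        · apply mul_le_mul hfrac1 _ (by positivity) (by norm_num)
          apply mul_le_mul _ hinvS (by positivity) (by positivity)
          rw [abs_sub_comm]; exact hSS
    _ ≤ (Real.exp M * ∑ j, |t j - t' j|) * Real.exp M +
        1 * ((Real.exp M * ∑ j, |t j - t' j|) * Real.exp M) := by
        have := mul_le_mul_of_nonneg_left hterm_le (Real.exp_pos M).le
        nlinarith [Real.exp_pos M]
    _ = 2 * (Real.exp M * Real.exp M) * ∑ j, |t j - t' j| := by ring
    _ = 2 * Real.exp (2 * M) * ∑ j, |t j - t' j| := by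
        rw [← Real.exp_add]; ring_nf

lemma mul_diff_bound (s s' q q' g0 A D : ℝ) (hsd : |s - s'| ≤ A) (hq : |q| ≤ g0)
    (hs' : |s'| ≤ 1) (hqd : |q - q'| ≤ D) (hA : 0 ≤ A) :
    |s * q - s' * q'| ≤ A * g0 + D := by
  have hg0 : 0 ≤ g0 := le_trans (abs_nonneg q) hq
  have hD : 0 ≤ D := le_trans (abs_nonneg _) hqd
  have hid : s*q - s'*q' = (s - s')*q + s'*(q - q') := by ring
  calc |s*q - s'*q'| ≤ |(s - s') * q| + |s' * (q - q')| := by rw [hid]; exact abs_add_le _ _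
    _ = |s - s'| * |q| + |s'| * |q - q'| := by rw [abs_mul, abs_mul]
    _ ≤ A*g0 + 1*D := add_le_add (mul_le_mul hsd hq (abs_nonneg q) hA)
        (mul_le_mul hs' hqd (abs_nonneg _) zero_le_one)
    _ = A*g0 + D := by rw [one_mul]

lemma softmax_abs_le_one {n : ℕ} (t : Fin n → ℝ) (i : Fin n) :
    |Real.exp (t i) / ∑ j, Real.exp (t j)| ≤ 1 := by
  have hSi : Real.exp (t i) ≤ ∑ j, Real.exp (t j) :=
    Finset.single_le_sum (fun j _ => (Real.exp_pos (t j)).le) (Finset.mem_univ i)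
  have hSpos : 0 < ∑ j, Real.exp (t j) := lt_of_lt_of_le (Real.exp_pos _) hSi
  rw [abs_of_pos (div_pos (Real.exp_pos _) hSpos), div_le_one hSpos]
  exact hSi

lemma softmax_sum_le_one {n : ℕ} (t : Fin n → ℝ) :
    ∑ i, Real.exp (t i) / (∑ j, Real.exp (t j)) ≤ 1 := by
  rw [← Finset.sum_div]
  rcases eq_or_ne (∑ j, Real.exp (t j)) 0 with h | h
  · rw [h]; simp
  · rw [div_self h]

lemma wg_sum_le {n : ℕ} (w g : Fin n → ℝ) (g0 : ℝ) (hw : ∀ i, 0 ≤ w i)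
    (hws : ∑ i, w i ≤ 1) (hg : ∀ i, 0 ≤ g i) (hgu : ∀ i, g i ≤ g0) (hg0 : 0 ≤ g0) :
    |∑ i, w i * g i| ≤ g0 := by
  rw [abs_of_nonneg (Finset.sum_nonneg fun i _ => mul_nonneg (hw i) (hg i))]
  calc ∑ i, w i * g i ≤ ∑ i, w i * g0 :=
      Finset.sum_le_sum (fun i _ => mul_le_mul_of_nonneg_left (hgu i) (hw i))
    _ = (∑ i, w i) * g0 := by rw [← Finset.sum_mul]
    _ ≤ 1 * g0 := mul_le_mul_of_nonneg_right hws hg0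
    _ = g0 := one_mul _

lemma abs_sum_diff {n : ℕ} (f g : Fin n → ℝ) :
    |∑ i, f i - ∑ i, g i| ≤ ∑ i, |f i - g i| := by
  rw [← Finset.sum_sub_distrib]; exact Finset.abs_sum_le_sum_abs _ _

lemma affine_abs_le {d : ℕ} (B K : ℝ) (hB : 0 ≤ B) (hK : 0 ≤ K)
    (x a : Euc d) (b : ℝ) (ha : ‖a‖ ≤ K) (hb : |b| ≤ K) (hx : ‖x‖ ≤ B) :
    |⟪a, x⟫ + b| ≤ K * B + K := by
  have h1 : |⟪a, x⟫| ≤ ‖a‖ * ‖x‖ := abs_real_inner_le_norm a x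
  have h2 : ‖a‖ * ‖x‖ ≤ K * B := mul_le_mul ha hx (norm_nonneg x) hK
  calc |⟪a, x⟫ + b| ≤ |⟪a, x⟫| + |b| := abs_add_le _ _
    _ ≤ K * B + K := by linarith

lemma affine_diff_le {d : ℕ} (B Bx : ℝ) (hBBx : B ≤ Bx) (hBx1 : 1 ≤ Bx)
    (x a a' : Euc d) (b b' : ℝ) (hx : ‖x‖ ≤ B) :
    |(⟪a, x⟫ + b) - (⟪a', x⟫ + b')| ≤ Bx * (‖a - a'‖ + |b - b'|) := by
  have he : (⟪a, x⟫ + b) - (⟪a', x⟫ + b') = ⟪a - a', x⟫ + (b - b') := by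
    rw [inner_sub_left]; ring
  have h1 : |⟪a - a', x⟫| ≤ ‖a - a'‖ * ‖x‖ := abs_real_inner_le_norm _ _
  have h2 : ‖a - a'‖ * ‖x‖ ≤ ‖a - a'‖ * Bx :=
    mul_le_mul_of_nonneg_left (le_trans hx hBBx) (norm_nonneg _)
  calc |(⟪a, x⟫ + b) - (⟪a', x⟫ + b')| = |⟪a - a', x⟫ + (b - b')| := by rw [he]
    _ ≤ |⟪a - a', x⟫| + |b - b'| := abs_add_le _ _
    _ ≤ Bx * (‖a - a'‖ + |b - b'|) := by
        nlinarith [norm_nonneg (a - a'), abs_nonneg (b - b')]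

lemma gate_diff {d n : ℕ} (B K Bx T : ℝ) (hK : 0 ≤ K)
    (hBBx : B ≤ Bx) (hBx1 : 1 ≤ Bx)
    (x : Euc d) (hx : ‖x‖ ≤ B)
    (a a' : Fin n → Euc d) (b b' : Fin n → ℝ)
    (ha : ∀ j, ‖a j‖ ≤ K) (hb : ∀ j, |b j| ≤ K)
    (ha' : ∀ j, ‖a' j‖ ≤ K) (hb' : ∀ j, |b' j| ≤ K)
    (hsum : ∑ j, (‖a j - a' j‖ + |b j - b' j|) ≤ T) (i : Fin n) :
    |Real.exp (⟪a i, x⟫ + b i) / (∑ j, Real.exp (⟪a j, x⟫ + b j)) -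
     Real.exp (⟪a' i, x⟫ + b' i) / (∑ j, Real.exp (⟪a' j, x⟫ + b' j))|
      ≤ (2 * Real.exp (2*(K*B+K)) * Bx) * T := by
  have hB0 : 0 ≤ B := le_trans (norm_nonneg x) hx
  have h0 := softmax_diff (K*B+K) (fun j => ⟪a j, x⟫ + b j) (fun j => ⟪a' j, x⟫ + b' j)
    (fun j => affine_abs_le B K hB0 hK x (a j) (b j) (ha j) (hb j) hx)
    (fun j => affine_abs_le B K hB0 hK x (a' j) (b' j) (ha' j) (hb' j) hx) i
  refine le_trans h0 ?_
  have hsum2 : ∑ j, |(⟪a j, x⟫ + b j) - (⟪a' j, x⟫ + b' j)| ≤ Bx * T := by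
    calc ∑ j, |(⟪a j, x⟫ + b j) - (⟪a' j, x⟫ + b' j)|
        ≤ ∑ j, Bx * (‖a j - a' j‖ + |b j - b' j|) :=
          Finset.sum_le_sum (fun j _ =>
            affine_diff_le B Bx hBBx hBx1 x (a j) (a' j) (b j) (b' j) hx)
      _ = Bx * ∑ j, (‖a j - a' j‖ + |b j - b' j|) := by rw [Finset.mul_sum]
      _ ≤ Bx * T := mul_le_mul_of_nonneg_left hsum (by linarith)
  calc 2 * Real.exp (2*(K*B+K)) * ∑ j, |(⟪a j, x⟫ + b j) - (⟪a' j, x⟫ + b' j)|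
      ≤ 2 * Real.exp (2*(K*B+K)) * (Bx * T) :=
        mul_le_mul_of_nonneg_left hsum2 (by positivity)
    _ = (2 * Real.exp (2*(K*B+K)) * Bx) * T := by ring

lemma expert_diff {d : ℕ} (B Bx ℓ u T : ℝ) (hℓ : 0 < ℓ)
    (hBBx : B ≤ Bx) (hBx1 : 1 ≤ Bx)
    (x : Euc d) (hx : ‖x‖ ≤ B) (η η' : Euc d) (τ τ' ν ν' y : ℝ)
    (hν : ℓ ≤ ν) (hνu : ν ≤ u) (hν' : ℓ ≤ ν') (hνu' : ν' ≤ u)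
    (hT : ‖η - η'‖ + |τ - τ'| + |ν - ν'| ≤ T) :
    |gaussPDF (⟪η, x⟫ + τ) ν y - gaussPDF (⟪η', x⟫ + τ') ν' y| ≤
      ((3/ℓ + 1/(ℓ*Real.sqrt ℓ) + u/(ℓ^2*Real.sqrt ℓ)) * Bx) * T := by
  have hsl0 : 0 < Real.sqrt ℓ := Real.sqrt_pos.2 hℓ
  have hu0 : 0 < u := lt_of_lt_of_le (lt_of_lt_of_le hℓ hν) hνu
  have hL0 : 0 < 3/ℓ + 1/(ℓ*Real.sqrt ℓ) + u/(ℓ^2*Real.sqrt ℓ) := by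
    have c1 : 0 < 3/ℓ := div_pos (by norm_num) hℓ
    have c2 : (0:ℝ) < 1/(ℓ*Real.sqrt ℓ) := div_pos one_pos (mul_pos hℓ hsl0)
    have c3 : 0 < u/(ℓ^2*Real.sqrt ℓ) := div_pos hu0 (mul_pos (pow_pos hℓ 2) hsl0)
    linarith
  have h0 := gauss_lip ℓ u (⟪η, x⟫ + τ) (⟪η', x⟫ + τ') ν ν' y hℓ hν hνu hν' hνu'
  refine le_trans h0 ?_
  have hm := affine_diff_le B Bx hBBx hBx1 x η η' τ τ' hx
  have hstep : |(⟪η, x⟫ + τ) - (⟪η', x⟫ + τ')| + |ν - ν'| ≤ Bx * T := by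
    have h1 : |ν - ν'| ≤ Bx * |ν - ν'| := by
      nlinarith [abs_nonneg (ν - ν')]
    have h2 : Bx * (‖η - η'‖ + |τ - τ'|) + Bx * |ν - ν'| = Bx * (‖η - η'‖ + |τ - τ'| + |ν - ν'|) := by ring
    have h3 : Bx * (‖η - η'‖ + |τ - τ'| + |ν - ν'|) ≤ Bx * T :=
      mul_le_mul_of_nonneg_left hT (by linarith)
    linarith
  calc (3/ℓ + 1/(ℓ*Real.sqrt ℓ) + u/(ℓ^2*Real.sqrt ℓ)) *
        (|(⟪η, x⟫ + τ) - (⟪η', x⟫ + τ')| + |ν - ν'|)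
      ≤ (3/ℓ + 1/(ℓ*Real.sqrt ℓ) + u/(ℓ^2*Real.sqrt ℓ)) * (Bx * T) :=
        mul_le_mul_of_nonneg_left hstep hL0.le
    _ = ((3/ℓ + 1/(ℓ*Real.sqrt ℓ) + u/(ℓ^2*Real.sqrt ℓ)) * Bx) * T := by ring

-- Main theorem ---------------------------------------------------------------

set_option maxHeartbeats 2000000 in
/-- Parameter-perturbation bound for the Softmax–Softmax Gaussian HMoE density. -/
theorem pSS_param_perturbation (d k1 k2 : ℕ) (B K ℓ u : ℝ)
    (hB : 0 < B) (hK : 0 < K) (hℓ : 0 < ℓ) (hℓu : ℓ ≤ u) :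
    ∃ C : ℝ, 0 < C ∧
      ∀ P P' : HMoE d k1 k2,
      (∀ i1, ‖P.a i1‖ ≤ K ∧ |P.b i1| ≤ K) →
      (∀ i1, ‖P'.a i1‖ ≤ K ∧ |P'.b i1| ≤ K) →
      (∀ i1 i2, ‖P.ω i1 i2‖ ≤ K ∧ |P.β i1 i2| ≤ K ∧ ‖P.η i1 i2‖ ≤ K ∧ |P.τ i1 i2| ≤ K) →
      (∀ i1 i2, ‖P'.ω i1 i2‖ ≤ K ∧ |P'.β i1 i2| ≤ K ∧ ‖P'.η i1 i2‖ ≤ K ∧ |P'.τ i1 i2| ≤ K) →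
      (∀ i1 i2, P.ν i1 i2 ∈ Set.Icc ℓ u) → (∀ i1 i2, P'.ν i1 i2 ∈ Set.Icc ℓ u) →
      ∀ (x : Euc d) (y : ℝ), ‖x‖ ≤ B →
        |pSS P x y - pSS P' x y| ≤
          C * ((∑ i1, (‖P.a i1 - P'.a i1‖ + |P.b i1 - P'.b i1|)) +
            ∑ i1, ∑ i2, (‖P.ω i1 i2 - P'.ω i1 i2‖ + |P.β i1 i2 - P'.β i1 i2| +
              ‖P.η i1 i2 - P'.η i1 i2‖ + |P.τ i1 i2 - P'.τ i1 i2| +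
              |P.ν i1 i2 - P'.ν i1 i2|)) := by
  have hu0 : 0 < u := lt_of_lt_of_le hℓ hℓu
  have hsl0 : 0 < Real.sqrt ℓ := Real.sqrt_pos.2 hℓ
  have hBx1 : (1:ℝ) ≤ max B 1 := le_max_right _ _
  have hBBx : B ≤ max B 1 := le_max_left _ _
  have hBx0 : (0:ℝ) < max B 1 := lt_of_lt_of_le one_pos hBx1
  have hEC0 : 0 < 2 * Real.exp (2*(K*B+K)) * (max B 1) := by positivity
  have hGC0 : 0 < (3/ℓ + 1/(ℓ*Real.sqrt ℓ) + u/(ℓ^2*Real.sqrt ℓ)) * (max B 1) := by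
    have c1 : 0 < 3/ℓ := div_pos (by norm_num) hℓ
    have c2 : (0:ℝ) < 1/(ℓ*Real.sqrt ℓ) := div_pos one_pos (mul_pos hℓ hsl0)
    have c3 : 0 < u/(ℓ^2*Real.sqrt ℓ) := div_pos hu0 (mul_pos (pow_pos hℓ 2) hsl0)
    nlinarith
  have hG00 : (0:ℝ) ≤ (Real.sqrt ℓ)⁻¹ := by positivity
  have hC00 : 0 ≤ 2 * Real.exp (2*(K*B+K)) * (max B 1) * (Real.sqrt ℓ)⁻¹ +
      (k2:ℝ) * (2 * Real.exp (2*(K*B+K)) * (max B 1) * (Real.sqrt ℓ)⁻¹ +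
        (3/ℓ + 1/(ℓ*Real.sqrt ℓ) + u/(ℓ^2*Real.sqrt ℓ)) * (max B 1)) := by
    have h1 : 0 ≤ 2 * Real.exp (2*(K*B+K)) * (max B 1) * (Real.sqrt ℓ)⁻¹ :=
      mul_nonneg hEC0.le hG00
    have h2 : (0:ℝ) ≤ (k2:ℝ) := Nat.cast_nonneg k2
    nlinarith [hGC0.le]
  refine ⟨(k1:ℝ) * (2 * Real.exp (2*(K*B+K)) * (max B 1) * (Real.sqrt ℓ)⁻¹ +
      (k2:ℝ) * (2 * Real.exp (2*(K*B+K)) * (max B 1) * (Real.sqrt ℓ)⁻¹ +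
        (3/ℓ + 1/(ℓ*Real.sqrt ℓ) + u/(ℓ^2*Real.sqrt ℓ)) * (max B 1))) + 1, ?_, ?_⟩
  · have h3 : (0:ℝ) ≤ (k1:ℝ) := Nat.cast_nonneg k1
    nlinarith
  intro P P' hPab hP'ab hPo hP'o hPν hP'ν x y hx
  have hDnn : ∀ i1 i2, (0:ℝ) ≤ ‖P.ω i1 i2 - P'.ω i1 i2‖ + |P.β i1 i2 - P'.β i1 i2| +
      ‖P.η i1 i2 - P'.η i1 i2‖ + |P.τ i1 i2 - P'.τ i1 i2| + |P.ν i1 i2 - P'.ν i1 i2| :=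
    fun i1 i2 => by positivity
  have hS1nn : (0:ℝ) ≤ ∑ i1, (‖P.a i1 - P'.a i1‖ + |P.b i1 - P'.b i1|) :=
    Finset.sum_nonneg fun i1 _ => by positivity
  have hS2inn : ∀ i1, (0:ℝ) ≤ ∑ i2, (‖P.ω i1 i2 - P'.ω i1 i2‖ + |P.β i1 i2 - P'.β i1 i2| +
      ‖P.η i1 i2 - P'.η i1 i2‖ + |P.τ i1 i2 - P'.τ i1 i2| + |P.ν i1 i2 - P'.ν i1 i2|) :=
    fun i1 => Finset.sum_nonneg fun i2 _ => hDnn i1 i2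
  have hS2nn : (0:ℝ) ≤ ∑ i1, ∑ i2, (‖P.ω i1 i2 - P'.ω i1 i2‖ + |P.β i1 i2 - P'.β i1 i2| +
      ‖P.η i1 i2 - P'.η i1 i2‖ + |P.τ i1 i2 - P'.τ i1 i2| + |P.ν i1 i2 - P'.ν i1 i2|) :=
    Finset.sum_nonneg fun i1 _ => hS2inn i1
  set T : ℝ := (∑ i1, (‖P.a i1 - P'.a i1‖ + |P.b i1 - P'.b i1|)) +
      ∑ i1, ∑ i2, (‖P.ω i1 i2 - P'.ω i1 i2‖ + |P.β i1 i2 - P'.β i1 i2| +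
        ‖P.η i1 i2 - P'.η i1 i2‖ + |P.τ i1 i2 - P'.τ i1 i2| +
        |P.ν i1 i2 - P'.ν i1 i2|) with hTdef
  have hT0 : 0 ≤ T := by rw [hTdef]; exact add_nonneg hS1nn hS2nn
  have hTa : ∑ i1, (‖P.a i1 - P'.a i1‖ + |P.b i1 - P'.b i1|) ≤ T := by
    rw [hTdef]; exact le_add_of_nonneg_right hS2nn
  have hTw : ∀ i1, ∑ i2, (‖P.ω i1 i2 - P'.ω i1 i2‖ + |P.β i1 i2 - P'.β i1 i2|) ≤ T := by
    intro i1
    have h1 : ∑ i2, (‖P.ω i1 i2 - P'.ω i1 i2‖ + |P.β i1 i2 - P'.β i1 i2|) ≤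
        ∑ i2, (‖P.ω i1 i2 - P'.ω i1 i2‖ + |P.β i1 i2 - P'.β i1 i2| +
          ‖P.η i1 i2 - P'.η i1 i2‖ + |P.τ i1 i2 - P'.τ i1 i2| + |P.ν i1 i2 - P'.ν i1 i2|) :=
      Finset.sum_le_sum fun i2 _ => by
        have := norm_nonneg (P.η i1 i2 - P'.η i1 i2)
        have := abs_nonneg (P.τ i1 i2 - P'.τ i1 i2)
        have := abs_nonneg (P.ν i1 i2 - P'.ν i1 i2)
        linarith
    have h2 : ∑ i2, (‖P.ω i1 i2 - P'.ω i1 i2‖ + |P.β i1 i2 - P'.β i1 i2| +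
        ‖P.η i1 i2 - P'.η i1 i2‖ + |P.τ i1 i2 - P'.τ i1 i2| + |P.ν i1 i2 - P'.ν i1 i2|) ≤
        ∑ j1, ∑ i2, (‖P.ω j1 i2 - P'.ω j1 i2‖ + |P.β j1 i2 - P'.β j1 i2| +
          ‖P.η j1 i2 - P'.η j1 i2‖ + |P.τ j1 i2 - P'.τ j1 i2| + |P.ν j1 i2 - P'.ν j1 i2|) :=
      Finset.single_le_sum (f := fun j1 => ∑ i2, (‖P.ω j1 i2 - P'.ω j1 i2‖ +
        |P.β j1 i2 - P'.β j1 i2| + ‖P.η j1 i2 - P'.η j1 i2‖ + |P.τ j1 i2 - P'.τ j1 i2| +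
        |P.ν j1 i2 - P'.ν j1 i2|)) (fun j _ => hS2inn j) (Finset.mem_univ i1)
    rw [hTdef]
    linarith
  have hTg : ∀ i1 i2, ‖P.η i1 i2 - P'.η i1 i2‖ + |P.τ i1 i2 - P'.τ i1 i2| +
      |P.ν i1 i2 - P'.ν i1 i2| ≤ T := by
    intro i1 i2
    have h1 : ‖P.η i1 i2 - P'.η i1 i2‖ + |P.τ i1 i2 - P'.τ i1 i2| +
        |P.ν i1 i2 - P'.ν i1 i2| ≤ ‖P.ω i1 i2 - P'.ω i1 i2‖ + |P.β i1 i2 - P'.β i1 i2| +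
          ‖P.η i1 i2 - P'.η i1 i2‖ + |P.τ i1 i2 - P'.τ i1 i2| + |P.ν i1 i2 - P'.ν i1 i2| := by
      have := norm_nonneg (P.ω i1 i2 - P'.ω i1 i2)
      have := abs_nonneg (P.β i1 i2 - P'.β i1 i2)
      linarith
    have h2 : ‖P.ω i1 i2 - P'.ω i1 i2‖ + |P.β i1 i2 - P'.β i1 i2| +
        ‖P.η i1 i2 - P'.η i1 i2‖ + |P.τ i1 i2 - P'.τ i1 i2| + |P.ν i1 i2 - P'.ν i1 i2| ≤
        ∑ j2, (‖P.ω i1 j2 - P'.ω i1 j2‖ + |P.β i1 j2 - P'.β i1 j2| +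
          ‖P.η i1 j2 - P'.η i1 j2‖ + |P.τ i1 j2 - P'.τ i1 j2| + |P.ν i1 j2 - P'.ν i1 j2|) :=
      Finset.single_le_sum (f := fun j2 => ‖P.ω i1 j2 - P'.ω i1 j2‖ +
        |P.β i1 j2 - P'.β i1 j2| + ‖P.η i1 j2 - P'.η i1 j2‖ + |P.τ i1 j2 - P'.τ i1 j2| +
        |P.ν i1 j2 - P'.ν i1 j2|) (fun j _ => hDnn i1 j) (Finset.mem_univ i2)
    have h3 : ∑ j2, (‖P.ω i1 j2 - P'.ω i1 j2‖ + |P.β i1 j2 - P'.β i1 j2| +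
        ‖P.η i1 j2 - P'.η i1 j2‖ + |P.τ i1 j2 - P'.τ i1 j2| + |P.ν i1 j2 - P'.ν i1 j2|) ≤
        ∑ j1, ∑ j2, (‖P.ω j1 j2 - P'.ω j1 j2‖ + |P.β j1 j2 - P'.β j1 j2| +
          ‖P.η j1 j2 - P'.η j1 j2‖ + |P.τ j1 j2 - P'.τ j1 j2| + |P.ν j1 j2 - P'.ν j1 j2|) :=
      Finset.single_le_sum (f := fun j1 => ∑ j2, (‖P.ω j1 j2 - P'.ω j1 j2‖ +
        |P.β j1 j2 - P'.β j1 j2| + ‖P.η j1 j2 - P'.η j1 j2‖ + |P.τ j1 j2 - P'.τ j1 j2| +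
        |P.ν j1 j2 - P'.ν j1 j2|)) (fun j _ => hS2inn j) (Finset.mem_univ i1)
    rw [hTdef]
    linarith
  clear_value T
  -- per-group bound
  have key : ∀ i1 : Fin k1,
      |(Real.exp (⟪P.a i1, x⟫ + P.b i1) / ∑ j1, Real.exp (⟪P.a j1, x⟫ + P.b j1)) *
          (∑ i2, (Real.exp (⟪P.ω i1 i2, x⟫ + P.β i1 i2) /
              ∑ j2, Real.exp (⟪P.ω i1 j2, x⟫ + P.β i1 j2)) *
            gaussPDF (⟪P.η i1 i2, x⟫ + P.τ i1 i2) (P.ν i1 i2) y) -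
        (Real.exp (⟪P'.a i1, x⟫ + P'.b i1) / ∑ j1, Real.exp (⟪P'.a j1, x⟫ + P'.b j1)) *
          (∑ i2, (Real.exp (⟪P'.ω i1 i2, x⟫ + P'.β i1 i2) /
              ∑ j2, Real.exp (⟪P'.ω i1 j2, x⟫ + P'.β i1 j2)) *
            gaussPDF (⟪P'.η i1 i2, x⟫ + P'.τ i1 i2) (P'.ν i1 i2) y)| ≤
      (2 * Real.exp (2*(K*B+K)) * (max B 1) * (Real.sqrt ℓ)⁻¹ +
        (k2:ℝ) * (2 * Real.exp (2*(K*B+K)) * (max B 1) * (Real.sqrt ℓ)⁻¹ +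
          (3/ℓ + 1/(ℓ*Real.sqrt ℓ) + u/(ℓ^2*Real.sqrt ℓ)) * (max B 1))) * T := by
    intro i1
    have hsd := gate_diff B K (max B 1) T hK.le hBBx hBx1 x hx P.a P'.a P.b P'.b
      (fun j => (hPab j).1) (fun j => (hPab j).2)
      (fun j => (hP'ab j).1) (fun j => (hP'ab j).2) hTa i1
    have hQ : |∑ i2, (Real.exp (⟪P.ω i1 i2, x⟫ + P.β i1 i2) /
        ∑ j2, Real.exp (⟪P.ω i1 j2, x⟫ + P.β i1 j2)) *
          gaussPDF (⟪P.η i1 i2, x⟫ + P.τ i1 i2) (P.ν i1 i2) y| ≤ (Real.sqrt ℓ)⁻¹ :=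
      wg_sum_le _ _ _
        (fun i2 => div_nonneg (Real.exp_pos _).le
          (Finset.sum_nonneg fun j _ => (Real.exp_pos _).le))
        (softmax_sum_le_one (fun j2 => ⟪P.ω i1 j2, x⟫ + P.β i1 j2))
        (fun i2 => gaussPDF_nonneg _ _ _)
        (fun i2 => gaussPDF_le ℓ _ _ y hℓ (hPν i1 i2).1)
        hG00
    have hs' : |Real.exp (⟪P'.a i1, x⟫ + P'.b i1) /
        ∑ j1, Real.exp (⟪P'.a j1, x⟫ + P'.b j1)| ≤ 1 :=
      softmax_abs_le_one (fun j1 => ⟪P'.a j1, x⟫ + P'.b j1) i1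
    have hQd : |(∑ i2, (Real.exp (⟪P.ω i1 i2, x⟫ + P.β i1 i2) /
          ∑ j2, Real.exp (⟪P.ω i1 j2, x⟫ + P.β i1 j2)) *
            gaussPDF (⟪P.η i1 i2, x⟫ + P.τ i1 i2) (P.ν i1 i2) y) -
        (∑ i2, (Real.exp (⟪P'.ω i1 i2, x⟫ + P'.β i1 i2) /
          ∑ j2, Real.exp (⟪P'.ω i1 j2, x⟫ + P'.β i1 j2)) *
            gaussPDF (⟪P'.η i1 i2, x⟫ + P'.τ i1 i2) (P'.ν i1 i2) y)| ≤
        ((k2:ℝ) * (2 * Real.exp (2*(K*B+K)) * (max B 1) * (Real.sqrt ℓ)⁻¹ +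
          (3/ℓ + 1/(ℓ*Real.sqrt ℓ) + u/(ℓ^2*Real.sqrt ℓ)) * (max B 1))) * T := by
      calc |(∑ i2, (Real.exp (⟪P.ω i1 i2, x⟫ + P.β i1 i2) /
            ∑ j2, Real.exp (⟪P.ω i1 j2, x⟫ + P.β i1 j2)) *
              gaussPDF (⟪P.η i1 i2, x⟫ + P.τ i1 i2) (P.ν i1 i2) y) -
          (∑ i2, (Real.exp (⟪P'.ω i1 i2, x⟫ + P'.β i1 i2) /
            ∑ j2, Real.exp (⟪P'.ω i1 j2, x⟫ + P'.β i1 j2)) *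
              gaussPDF (⟪P'.η i1 i2, x⟫ + P'.τ i1 i2) (P'.ν i1 i2) y)|
          ≤ ∑ i2, |(Real.exp (⟪P.ω i1 i2, x⟫ + P.β i1 i2) /
              ∑ j2, Real.exp (⟪P.ω i1 j2, x⟫ + P.β i1 j2)) *
                gaussPDF (⟪P.η i1 i2, x⟫ + P.τ i1 i2) (P.ν i1 i2) y -
              (Real.exp (⟪P'.ω i1 i2, x⟫ + P'.β i1 i2) /
              ∑ j2, Real.exp (⟪P'.ω i1 j2, x⟫ + P'.β i1 j2)) *
                gaussPDF (⟪P'.η i1 i2, x⟫ + P'.τ i1 i2) (P'.ν i1 i2) y| :=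
            abs_sum_diff _ _
        _ ≤ ∑ _i2 : Fin k2, ((2 * Real.exp (2*(K*B+K)) * (max B 1)) * T * (Real.sqrt ℓ)⁻¹ +
              ((3/ℓ + 1/(ℓ*Real.sqrt ℓ) + u/(ℓ^2*Real.sqrt ℓ)) * (max B 1)) * T) := by
            apply Finset.sum_le_sum
            intro i2 _
            apply mul_diff_bound
            · exact gate_diff B K (max B 1) T hK.le hBBx hBx1 x hx
                (fun j2 => P.ω i1 j2) (fun j2 => P'.ω i1 j2)
                (fun j2 => P.β i1 j2) (fun j2 => P'.β i1 j2)
                (fun j => (hPo i1 j).1) (fun j => (hPo i1 j).2.1)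
                (fun j => (hP'o i1 j).1) (fun j => (hP'o i1 j).2.1) (hTw i1) i2
            · rw [abs_of_nonneg (gaussPDF_nonneg _ _ _)]
              exact gaussPDF_le ℓ _ _ y hℓ (hPν i1 i2).1
            · exact softmax_abs_le_one (fun j2 => ⟪P'.ω i1 j2, x⟫ + P'.β i1 j2) i2
            · exact expert_diff B (max B 1) ℓ u T hℓ hBBx hBx1 x hx
                (P.η i1 i2) (P'.η i1 i2) (P.τ i1 i2) (P'.τ i1 i2)
                (P.ν i1 i2) (P'.ν i1 i2) y
                (hPν i1 i2).1 (hPν i1 i2).2 (hP'ν i1 i2).1 (hP'ν i1 i2).2 (hTg i1 i2)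
            · exact mul_nonneg hEC0.le hT0
        _ = (k2:ℝ) * ((2 * Real.exp (2*(K*B+K)) * (max B 1)) * T * (Real.sqrt ℓ)⁻¹ +
              ((3/ℓ + 1/(ℓ*Real.sqrt ℓ) + u/(ℓ^2*Real.sqrt ℓ)) * (max B 1)) * T) := by
            rw [Finset.sum_const, Finset.card_univ, Fintype.card_fin, nsmul_eq_mul]
        _ = ((k2:ℝ) * (2 * Real.exp (2*(K*B+K)) * (max B 1) * (Real.sqrt ℓ)⁻¹ +
              (3/ℓ + 1/(ℓ*Real.sqrt ℓ) + u/(ℓ^2*Real.sqrt ℓ)) * (max B 1))) * T := by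
            ring
    have houter := mul_diff_bound _ _ _ _ ((Real.sqrt ℓ)⁻¹)
      ((2 * Real.exp (2*(K*B+K)) * (max B 1)) * T)
      (((k2:ℝ) * (2 * Real.exp (2*(K*B+K)) * (max B 1) * (Real.sqrt ℓ)⁻¹ +
        (3/ℓ + 1/(ℓ*Real.sqrt ℓ) + u/(ℓ^2*Real.sqrt ℓ)) * (max B 1))) * T)
      hsd hQ hs' hQd (mul_nonneg hEC0.le hT0)
    refine le_trans houter (le_of_eq ?_)
    ring
  -- sum over groups
  simp only [pSS]
  calc |(∑ i1, (Real.exp (⟪P.a i1, x⟫ + P.b i1) /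
          ∑ j1, Real.exp (⟪P.a j1, x⟫ + P.b j1)) *
          (∑ i2, (Real.exp (⟪P.ω i1 i2, x⟫ + P.β i1 i2) /
              ∑ j2, Real.exp (⟪P.ω i1 j2, x⟫ + P.β i1 j2)) *
            gaussPDF (⟪P.η i1 i2, x⟫ + P.τ i1 i2) (P.ν i1 i2) y)) -
        ∑ i1, (Real.exp (⟪P'.a i1, x⟫ + P'.b i1) /
          ∑ j1, Real.exp (⟪P'.a j1, x⟫ + P'.b j1)) *
          (∑ i2, (Real.exp (⟪P'.ω i1 i2, x⟫ + P'.β i1 i2) /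
              ∑ j2, Real.exp (⟪P'.ω i1 j2, x⟫ + P'.β i1 j2)) *
            gaussPDF (⟪P'.η i1 i2, x⟫ + P'.τ i1 i2) (P'.ν i1 i2) y)|
      ≤ ∑ i1, |(Real.exp (⟪P.a i1, x⟫ + P.b i1) /
          ∑ j1, Real.exp (⟪P.a j1, x⟫ + P.b j1)) *
          (∑ i2, (Real.exp (⟪P.ω i1 i2, x⟫ + P.β i1 i2) /
              ∑ j2, Real.exp (⟪P.ω i1 j2, x⟫ + P.β i1 j2)) *
            gaussPDF (⟪P.η i1 i2, x⟫ + P.τ i1 i2) (P.ν i1 i2) y) -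
          (Real.exp (⟪P'.a i1, x⟫ + P'.b i1) /
          ∑ j1, Real.exp (⟪P'.a j1, x⟫ + P'.b j1)) *
          (∑ i2, (Real.exp (⟪P'.ω i1 i2, x⟫ + P'.β i1 i2) /
              ∑ j2, Real.exp (⟪P'.ω i1 j2, x⟫ + P'.β i1 j2)) *
            gaussPDF (⟪P'.η i1 i2, x⟫ + P'.τ i1 i2) (P'.ν i1 i2) y)| :=
        abs_sum_diff _ _
    _ ≤ ∑ _i1 : Fin k1, (2 * Real.exp (2*(K*B+K)) * (max B 1) * (Real.sqrt ℓ)⁻¹ +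
          (k2:ℝ) * (2 * Real.exp (2*(K*B+K)) * (max B 1) * (Real.sqrt ℓ)⁻¹ +
            (3/ℓ + 1/(ℓ*Real.sqrt ℓ) + u/(ℓ^2*Real.sqrt ℓ)) * (max B 1))) * T :=
        Finset.sum_le_sum (fun i1 _ => key i1)
    _ = (k1:ℝ) * ((2 * Real.exp (2*(K*B+K)) * (max B 1) * (Real.sqrt ℓ)⁻¹ +
          (k2:ℝ) * (2 * Real.exp (2*(K*B+K)) * (max B 1) * (Real.sqrt ℓ)⁻¹ +
            (3/ℓ + 1/(ℓ*Real.sqrt ℓ) + u/(ℓ^2*Real.sqrt ℓ)) * (max B 1))) * T) := by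
        rw [Finset.sum_const, Finset.card_univ, Fintype.card_fin, nsmul_eq_mul]
    _ ≤ ((k1:ℝ) * (2 * Real.exp (2*(K*B+K)) * (max B 1) * (Real.sqrt ℓ)⁻¹ +
          (k2:ℝ) * (2 * Real.exp (2*(K*B+K)) * (max B 1) * (Real.sqrt ℓ)⁻¹ +
            (3/ℓ + 1/(ℓ*Real.sqrt ℓ) + u/(ℓ^2*Real.sqrt ℓ)) * (max B 1))) + 1) * T := by
        have h3 : (0:ℝ) ≤ (k1:ℝ) := Nat.cast_nonneg k1
        nlinarith
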